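/- Let n ≥ 1 be a natural number, t0 ∈ ℝ, Tc > 0, α > 0, 0 < η ≤ 1, let υ : ℝⁿ → ℝ be any function, and let π : [0, ∞) → ℝ. Define κ(s) = η/(α·(Tc - η·s)) for s ∈ [0, Tc/η), φ(t) = -α⁻¹·ln(1 - η·(t - t0)/Tc), and Ω(s) = diag(1, κ(s), …, κ(s)^{n-1}). Suppose y : [0, ∞) → ℝⁿ is such that for every τ ≥ 0, y_i has derivative y_{i+1}(τ) - α·(i-1)·y_i(τ) at τ for i = 1, …, n-1, and y_n has derivative υ(y(τ)) - α·(n-1)·y_n(τ) + π(τ) at τ. Define x : [t0, t0 + Tc/η) → ℝⁿ by x(t) = Ω(t - t0)·y(φ(t)), i.e., x_i(t) = κ(t - t0)^{i-1}·y_i(φ(t)). Then for every t ∈ [t0, t0 + Tc/η): x_i has derivative x_{i+1}(t) at t for i = 1, …, n-1, and x_n has derivative κ(t - t0)ⁿ·υ(Ω(t - t0)⁻¹·x(t)) + δ(t) at t, where δ(t) = κ(t - t0)ⁿ·π(φ(t)). -/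

import Mathlib

private lemma pow_key_stmt16 (c α : ℝ) (k : ℕ) :
    (k : ℝ) * c ^ (k - 1) * (α * c ^ 2) = α * (k : ℝ) * c ^ (k + 1) := by
  cases k with
  | zero => simp
  | succ m => simp only [Nat.succ_sub_one]; push_cast; ring

/-- Converse direction of the coordinate-and-time change of Theorem 1 of the paper:
if `y` solves the auxiliary system `dy_i/dτ = y_{i+1} - α (i-1) y_i`,
`dy_n/dτ = υ(y) - α (n-1) y_n + π(τ)`, then `x(t) = Ω(t - t0) y(φ(t))` (componentwise
`x_i(t) = κ(t - t0)^{i-1} y_i(φ(t))`, here with `0`-based indices) solves the perturbed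
chain of integrators `ẋ_i = x_{i+1}`,
`ẋ_n = κ(t - t0)ⁿ υ(Ω(t - t0)⁻¹ x(t)) + δ(t)` with `δ(t) = κ(t - t0)ⁿ π(φ(t))`. -/
theorem stmt_16 (n : ℕ) (hn : 1 ≤ n) (t0 Tc α η : ℝ) (hTc : 0 < Tc) (hα : 0 < α)
    (hη0 : 0 < η) (hη1 : η ≤ 1)
    (υ : (Fin n → ℝ) → ℝ) (π : ℝ → ℝ)
    (κ : ℝ → ℝ) (hκ : ∀ s, κ s = η / (α * (Tc - η * s)))
    (φ : ℝ → ℝ) (hφ : ∀ t, φ t = -α⁻¹ * Real.log (1 - η * (t - t0) / Tc))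
    (y : ℝ → Fin n → ℝ)
    (hy : ∀ τ : ℝ, 0 ≤ τ → ∀ i : Fin n, ∀ h : (i : ℕ) + 1 < n,
      HasDerivAt (fun σ => y σ i)
        (y τ ⟨(i : ℕ) + 1, h⟩ - α * (i : ℕ) * y τ i) τ)
    (hyn : ∀ τ : ℝ, 0 ≤ τ →
      HasDerivAt (fun σ => y σ ⟨n - 1, by omega⟩)
        (υ (y τ) - α * ((n : ℝ) - 1) * y τ ⟨n - 1, by omega⟩ + π τ) τ)
    (x : ℝ → Fin n → ℝ)
    (hx : ∀ t, ∀ i : Fin n, x t i = κ (t - t0) ^ (i : ℕ) * y (φ t) i)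
    (δ : ℝ → ℝ) (hδ : ∀ t, δ t = κ (t - t0) ^ n * π (φ t)) :
    ∀ t ∈ Set.Ico t0 (t0 + Tc / η),
      (∀ i : Fin n, ∀ h : (i : ℕ) + 1 < n,
        HasDerivAt (fun s => x s i) (x t ⟨(i : ℕ) + 1, h⟩) t) ∧
      HasDerivAt (fun s => x s ⟨n - 1, by omega⟩)
        (κ (t - t0) ^ n * υ (fun j => (κ (t - t0) ^ (j : ℕ))⁻¹ * x t j) + δ t) t := by
  obtain ⟨m, rfl⟩ : ∃ m, n = m + 1 := ⟨n - 1, (Nat.succ_pred_eq_of_pos hn).symm⟩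
  intro t ht
  obtain ⟨ht0, ht1⟩ := ht
  have hs0 : 0 ≤ t - t0 := by linarith
  have hsD : 0 < Tc - η * (t - t0) := by
    have h1 : t - t0 < Tc / η := by linarith
    have h2 := (lt_div_iff₀ hη0).mp h1
    nlinarith
  have hA : (1 : ℝ) - η * (t - t0) / Tc = (Tc - η * (t - t0)) / Tc := by
    field_simp
  have hApos : 0 < 1 - η * (t - t0) / Tc := by rw [hA]; positivity
  have hA1 : 1 - η * (t - t0) / Tc ≤ 1 := by
    have : 0 ≤ η * (t - t0) / Tc := by positivity
    linarith
  have hτ0 : 0 ≤ φ t := by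
    rw [hφ]
    have hlog := Real.log_nonpos (le_of_lt hApos) hA1
    have hαi : 0 ≤ α⁻¹ := by positivity
    nlinarith
  set c := κ (t - t0) with hcdef
  have hcval : c = η / (α * (Tc - η * (t - t0))) := hκ _
  have hcpos : 0 < c := by
    rw [hcval]; exact div_pos hη0 (mul_pos hα hsD)
  -- derivative of φ
  have hgd : HasDerivAt (fun u => 1 - η * (u - t0) / Tc) (-(η / Tc)) t := by
    have h := ((((hasDerivAt_id t).sub_const t0).const_mul η).div_const Tc).const_sub 1
    simpa using h
  have hφd : HasDerivAt φ c t := by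
    have h := (hgd.log (ne_of_gt hApos)).const_mul (-α⁻¹)
    have heq : -α⁻¹ * (-(η / Tc) / (1 - η * (t - t0) / Tc)) = c := by
      rw [hA, hcval]
      field_simp
    rw [heq] at h
    have hfun : φ = fun u => -α⁻¹ * Real.log (1 - η * (u - t0) / Tc) := funext hφ
    rw [hfun]
    exact h
  -- derivative of κ (· - t0)
  have hκd : HasDerivAt (fun u => κ (u - t0)) (α * c ^ 2) t := by
    have hden : HasDerivAt (fun u => α * (Tc - η * (u - t0))) (α * -(η * 1)) t := by
      exact ((((hasDerivAt_id t).sub_const t0).const_mul η).const_sub Tc).const_mul α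
    have hdiv := (hasDerivAt_const t η).div hden
      (ne_of_gt (mul_pos hα hsD))
    have hfun : (fun u => κ (u - t0)) = fun u => η / (α * (Tc - η * (u - t0))) :=
      funext fun u => hκ _
    rw [hfun]
    refine hdiv.congr_deriv ?_
    rw [hcval]
    field_simp
    ring
  have hxfun : ∀ i : Fin (m + 1),
      (fun u => x u i) = fun u => κ (u - t0) ^ (i : ℕ) * y (φ u) i :=
    fun i => funext fun u => hx u i
  constructor
  · intro i h
    have hyd := hy (φ t) hτ0 i h
    have hyc : HasDerivAt (fun u => y (φ u) i)
        ((y (φ t) ⟨(i : ℕ) + 1, h⟩ - α * (i : ℕ) * y (φ t) i) * c) t := by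
      simpa [Function.comp_def] using hyd.comp t hφd
    have hpow := hκd.pow (i : ℕ)
    have hprod := hpow.mul hyc
    rw [hxfun i, hx t ⟨(i : ℕ) + 1, h⟩]
    refine hprod.congr_deriv ?_
    simp only [Fin.val_mk, Pi.pow_apply, ← hcdef]
    rw [pow_key_stmt16 c α (i : ℕ)]
    ring
  · have hyd := hyn (φ t) hτ0
    have hyc : HasDerivAt (fun u => y (φ u) ⟨m + 1 - 1, by omega⟩)
        ((υ (y (φ t)) - α * (((m : ℝ) + 1) - 1) * y (φ t) ⟨m + 1 - 1, by omega⟩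
          + π (φ t)) * c) t := by
      have := hyd.comp t hφd
      simp only [Function.comp_def] at this
      refine this.congr_deriv ?_
      push_cast
      ring
    have hpow := hκd.pow ((⟨m + 1 - 1, by omega⟩ : Fin (m + 1)) : ℕ)
    have hprod := hpow.mul hyc
    have harg : (fun j : Fin (m + 1) => (c ^ (j : ℕ))⁻¹ * x t j) = y (φ t) := by
      funext j
      rw [hx t j, ← hcdef, inv_mul_cancel_left₀ (pow_ne_zero _ (ne_of_gt hcpos))]
    rw [hxfun, hδ, harg, ← hcdef]
    refine hprod.congr_deriv ?_
    simp only [Fin.val_mk, Nat.add_sub_cancel, Pi.pow_apply, ← hcdef]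
    rw [pow_key_stmt16 c α m]
    push_cast
    ring
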